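/- For every n ≥ 2 and every subset A of L: (i) if B ⊆ L \ A has cardinality continuum (2^ℵ₀), then B is not z-embedded in (X, τ(A)); (ii) if B ⊆ L \ A is uncountable and closed in L with its Euclidean subspace topology, then the subset L is not z-embedded in (X, τ(A)). -/

import Mathlib

open Metric Set TopologicalSpace

noncomputable section

/-- The last coordinate `x (n-1)` of a point of `EuclideanSpace ℝ (Fin n)`
(junk value `0` if `n = 0`). -/
def lastCoord (n : ℕ) (x : EuclideanSpace ℝ (Fin n)) : ℝ :=
  if h : 0 < n then x ⟨n - 1, Nat.sub_lt h one_pos⟩ else 0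

/-- The closed upper half-space `X = {x : x (n-1) ≥ 0}`. -/
def HalfSpace (n : ℕ) : Set (EuclideanSpace ℝ (Fin n)) := {x | 0 ≤ lastCoord n x}

/-- The open upper half-space `P = {x : x (n-1) > 0}`. -/
def OpenHalf (n : ℕ) : Set (EuclideanSpace ℝ (Fin n)) := {x | 0 < lastCoord n x}

/-- The boundary hyperplane `L = {x : x (n-1) = 0}`. -/
def Bdry (n : ℕ) : Set (EuclideanSpace ℝ (Fin n)) := {x | lastCoord n x = 0}

/-- The `n`-th standard basis vector `e` (junk value `0` if `n = 0`). -/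
def eVec (n : ℕ) : EuclideanSpace ℝ (Fin n) :=
  if h : 0 < n then EuclideanSpace.single ⟨n - 1, Nat.sub_lt h one_pos⟩ (1 : ℝ) else 0

/-- The tangent ball `B̃(a, ε) = {a} ∪ B(a + ε • e, ε)`. -/
def tangentBall (n : ℕ) (a : EuclideanSpace ℝ (Fin n)) (ε : ℝ) :
    Set (EuclideanSpace ℝ (Fin n)) :=
  {a} ∪ ball (a + ε • eVec n) ε

/-- The generating family for the topology `τ(A)` on `X`:
balls `B(a,ε)` with `a ∈ P`, `0 < ε < a (n-1)`; traces `B(a,ε) ∩ X` with `a ∈ A`, `ε > 0`;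
and tangent balls `B̃(a,ε)` with `a ∈ L \ A`, `ε > 0`. -/
def niemGen (n : ℕ) (A : Set (EuclideanSpace ℝ (Fin n))) : Set (Set (HalfSpace n)) :=
  {s | ∃ a ∈ OpenHalf n, ∃ ε, 0 < ε ∧ ε < lastCoord n a ∧
      s = Subtype.val ⁻¹' ball a ε} ∪
  {s | ∃ a ∈ A, ∃ ε, 0 < ε ∧ s = Subtype.val ⁻¹' ball a ε} ∪
  {s | ∃ a ∈ Bdry n \ A, ∃ ε, 0 < ε ∧ s = Subtype.val ⁻¹' tangentBall n a ε}

/-- The topology `τ(A)` on `X`; `τ(∅)` is the Niemytzki topology `τ_N`. -/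
def tau (n : ℕ) (A : Set (EuclideanSpace ℝ (Fin n))) : TopologicalSpace (HalfSpace n) :=
  generateFrom (niemGen n A)

/-- The inclusion of `L` into `X`. -/
def inclLX (n : ℕ) (x : Bdry n) : HalfSpace n := ⟨x.1, le_of_eq x.2.symm⟩

/-- The subspace topology `τ(A)|_L` on `L` induced from `(X, τ(A))`. -/
def tauL (n : ℕ) (A : Set (EuclideanSpace ℝ (Fin n))) : TopologicalSpace (Bdry n) :=
  TopologicalSpace.induced (inclLX n) (tau n A)

/-- A space is perfect if every closed set is a `Gδ`-set. -/
def IsPerfectSpace (X : Type*) [TopologicalSpace X] : Prop :=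
  ∀ s : Set X, IsClosed s → IsGδ s

/-- An `Fσ`-set: a countable union of closed sets. -/
def IsFsigma {X : Type*} [TopologicalSpace X] (s : Set X) : Prop :=
  ∃ F : ℕ → Set X, (∀ i, IsClosed (F i)) ∧ s = ⋃ i, F i

/-- Countably paracompact: every countable open cover admits a locally finite open refinement. -/
def CountablyParacompact (X : Type*) [TopologicalSpace X] : Prop :=
  ∀ u : ℕ → Set X, (∀ i, IsOpen (u i)) → (⋃ i, u i) = Set.univ →
    ∃ (ι : Type) (v : ι → Set X), (∀ j, IsOpen (v j)) ∧ (⋃ j, v j) = Set.univ ∧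
      LocallyFinite v ∧ ∀ j, ∃ i, v j ⊆ u i

/-- A zero set: the zero locus of a continuous real-valued function. -/
def IsZeroSet {X : Type*} [TopologicalSpace X] (s : Set X) : Prop :=
  ∃ f : X → ℝ, Continuous f ∧ s = f ⁻¹' {0}

/-- `Y` is z-embedded in `X` if every zero set of the subspace `Y`
is the trace on `Y` of a zero set of `X`. -/
def ZEmbedded {X : Type*} [TopologicalSpace X] (Y : Set X) : Prop :=
  ∀ s : Set Y, IsZeroSet s → ∃ Z : Set X, IsZeroSet Z ∧ s = Subtype.val ⁻¹' Z

/-- `Y` is `C*`-embedded in `X` if every bounded continuous real-valued function on the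
subspace `Y` extends to a bounded continuous function on `X`. -/
def CStarEmbedded {X : Type*} [TopologicalSpace X] (Y : Set X) : Prop :=
  ∀ f : Y → ℝ, Continuous f → (∃ M, ∀ y, |f y| ≤ M) →
    ∃ g : X → ℝ, Continuous g ∧ (∃ M, ∀ x, |g x| ≤ M) ∧ ∀ y : Y, g ↑y = f y
namespace TauProof

variable {n : ℕ} {A : Set (EuclideanSpace ℝ (Fin n))}

lemma lastCoord_eq (h : 0 < n) (x : EuclideanSpace ℝ (Fin n)) :
    lastCoord n x = x ⟨n - 1, Nat.sub_lt h one_pos⟩ := dif_pos h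

lemma lastCoord_continuous : Continuous (lastCoord n) := by
  rcases Nat.eq_zero_or_pos n with h | h
  · subst h
    have : lastCoord 0 = fun _ => (0:ℝ) := by
      funext x; exact dif_neg (lt_irrefl 0)
    rw [this]; exact continuous_const
  · have : lastCoord n = fun x => x ⟨n - 1, Nat.sub_lt h one_pos⟩ := by
      funext x; exact dif_pos h
    rw [this]
    exact (EuclideanSpace.proj _).continuous

lemma abs_lastCoord_sub_le (x y : EuclideanSpace ℝ (Fin n)) :
    |lastCoord n x - lastCoord n y| ≤ dist x y := by
  rcases Nat.eq_zero_or_pos n with h | h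
  · subst h
    rw [show lastCoord 0 x = 0 from dif_neg (lt_irrefl 0),
      show lastCoord 0 y = 0 from dif_neg (lt_irrefl 0)]
    simpa using dist_nonneg
  · rw [lastCoord_eq h, lastCoord_eq h, ← Real.dist_eq,
      ← Real.sqrt_sq (dist_nonneg (x := x ⟨n-1, Nat.sub_lt h one_pos⟩)), EuclideanSpace.dist_eq]
    exact Real.sqrt_le_sqrt (Finset.single_le_sum
      (f := fun j => dist (x j) (y j) ^ 2) (fun j _ => sq_nonneg _) (Finset.mem_univ _))

lemma lastCoord_lt_of_mem_ball {a y : EuclideanSpace ℝ (Fin n)} {ε : ℝ}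
    (hy : y ∈ ball a ε) : lastCoord n a - ε < lastCoord n y := by
  have h1 := (le_abs_self (lastCoord n a - lastCoord n y)).trans (abs_lastCoord_sub_le a y)
  rw [mem_ball, dist_comm] at hy
  linarith

lemma lastCoord_smul_eVec (h : 0 < n) (a : EuclideanSpace ℝ (Fin n)) (ε : ℝ) :
    lastCoord n (a + ε • eVec n) = lastCoord n a + ε := by
  rw [lastCoord_eq h, lastCoord_eq h]
  have : (a + ε • eVec n) ⟨n - 1, Nat.sub_lt h one_pos⟩
      = a ⟨n - 1, Nat.sub_lt h one_pos⟩ + ε * eVec n ⟨n - 1, Nat.sub_lt h one_pos⟩ := rfl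
  rw [this, eVec, dif_pos h, EuclideanSpace.single_apply, if_pos rfl, mul_one]

lemma norm_eVec (h : 0 < n) : ‖eVec n‖ = 1 := by
  rw [eVec, dif_pos h, EuclideanSpace.norm_single]; norm_num

lemma dist_add_smul_eVec (h : 0 < n) (a : EuclideanSpace ℝ (Fin n)) {ε : ℝ} (hε : 0 ≤ ε) :
    dist (a + ε • eVec n) a = ε := by
  rw [dist_self_add_left, norm_smul, norm_eVec h, Real.norm_eq_abs, abs_of_nonneg hε, mul_one]

lemma ballPart_subset_openHalf (h : 0 < n) {a : EuclideanSpace ℝ (Fin n)} {ε : ℝ}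
    (ha : 0 ≤ lastCoord n a) : ball (a + ε • eVec n) ε ⊆ OpenHalf n := by
  intro y hy
  have h1 := lastCoord_lt_of_mem_ball hy
  rw [lastCoord_smul_eVec h] at h1
  show 0 < lastCoord n y
  linarith

lemma tangentBall_subset_ball (h : 0 < n) {a : EuclideanSpace ℝ (Fin n)} {ε r : ℝ}
    (hε : 0 < ε) (hr : 2 * ε ≤ r) : tangentBall n a ε ⊆ ball a r := by
  rintro y (rfl | hy)
  · exact mem_ball_self (by linarith)
  · rw [mem_ball] at hy ⊢
    calc dist y a ≤ dist y (a + ε • eVec n) + dist (a + ε • eVec n) a := dist_triangle _ _ _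
      _ < ε + ε := by rw [dist_add_smul_eVec h a hε.le]; linarith
      _ ≤ r := by linarith

lemma tangentBall_mono (h : 0 < n) {a : EuclideanSpace ℝ (Fin n)} {δ ε : ℝ}
    (hδ : 0 < δ) (hδε : δ ≤ ε) : tangentBall n a δ ⊆ tangentBall n a ε := by
  rintro y (rfl | hy)
  · exact Or.inl rfl
  · refine Or.inr ?_
    rw [mem_ball] at hy ⊢
    have hd : dist (a + δ • eVec n) (a + ε • eVec n) = ε - δ := by
      rw [dist_add_left, dist_eq_norm, ← sub_smul, norm_smul, norm_eVec h,
        Real.norm_eq_abs, abs_of_nonpos (by linarith), mul_one]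
      ring
    calc dist y (a + ε • eVec n)
        ≤ dist y (a + δ • eVec n) + dist (a + δ • eVec n) (a + ε • eVec n) := dist_triangle _ _ _
      _ < δ + (ε - δ) := by rw [hd]; exact add_lt_add_of_lt_of_le hy le_rfl
      _ = ε := by ring

lemma mem_tangentBall_self {a : EuclideanSpace ℝ (Fin n)} {ε : ℝ} :
    a ∈ tangentBall n a ε := Or.inl rfl

lemma eq_of_mem_tangentBall (h : 0 < n) {a y : EuclideanSpace ℝ (Fin n)} {ε : ℝ}
    (ha : 0 ≤ lastCoord n a) (hy : y ∈ tangentBall n a ε) (hy0 : lastCoord n y = 0) : y = a := by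
  rcases hy with rfl | hy
  · rfl
  · exact absurd hy0 (ne_of_gt (ballPart_subset_openHalf h ha hy))

lemma ball_subset_openHalf {a : EuclideanSpace ℝ (Fin n)} {ε : ℝ}
    (hε : ε < lastCoord n a) : ball a ε ⊆ OpenHalf n := by
  intro y hy
  have h1 := lastCoord_lt_of_mem_ball hy
  show 0 < lastCoord n y
  linarith

/-- From a euclidean ball around an interior point, shrink inside. -/
lemma ball_in_ball {x a : EuclideanSpace ℝ (Fin n)} {ε : ℝ} (hx : x ∈ ball a ε) {δ : ℝ}
    (hδ : δ ≤ ε - dist x a) : ball x δ ⊆ ball a ε := by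
  intro y hy
  rw [mem_ball] at hy hx ⊢
  calc dist y a ≤ dist y x + dist x a := dist_triangle _ _ _
    _ < ε := by linarith

lemma shrink_pos {t : Set (HalfSpace n)} (hn : 0 < n) (ht : t ∈ niemGen n A)
    {x : HalfSpace n} (hx : x ∈ t) (hpos : 0 < lastCoord n x.1) :
    ∃ δ, 0 < δ ∧ δ < lastCoord n x.1 ∧ (Subtype.val ⁻¹' ball x.1 δ : Set (HalfSpace n)) ⊆ t := by
  rcases ht with (⟨a, _, ε, hε, hεa, rfl⟩ | ⟨a, _, ε, hε, rfl⟩) | ⟨a, ⟨ha0, _⟩, ε, hε, rfl⟩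
  · have hxb : (x : EuclideanSpace ℝ (Fin n)) ∈ ball a ε := hx
    have h3 : 0 < ε - dist (x : EuclideanSpace ℝ (Fin n)) a := by
      have := mem_ball.mp hxb; linarith
    set m := min (ε - dist (x : EuclideanSpace ℝ (Fin n)) a) (lastCoord n x.1) with hm
    have hm0 : 0 < m := lt_min h3 hpos
    refine ⟨m / 2, by linarith, ?_, ?_⟩
    · have := min_le_right (ε - dist (x : EuclideanSpace ℝ (Fin n)) a) (lastCoord n x.1)
      rw [← hm] at this; linarith
    · have hsub : ball (x : EuclideanSpace ℝ (Fin n)) (m / 2) ⊆ ball a ε := by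
        apply ball_in_ball hxb
        have := min_le_left (ε - dist (x : EuclideanSpace ℝ (Fin n)) a) (lastCoord n x.1)
        rw [← hm] at this; linarith
      exact fun y hy => hsub hy
  · have hxb : (x : EuclideanSpace ℝ (Fin n)) ∈ ball a ε := hx
    have h3 : 0 < ε - dist (x : EuclideanSpace ℝ (Fin n)) a := by
      have := mem_ball.mp hxb; linarith
    set m := min (ε - dist (x : EuclideanSpace ℝ (Fin n)) a) (lastCoord n x.1) with hm
    have hm0 : 0 < m := lt_min h3 hpos
    refine ⟨m / 2, by linarith, ?_, ?_⟩
    · have := min_le_right (ε - dist (x : EuclideanSpace ℝ (Fin n)) a) (lastCoord n x.1)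
      rw [← hm] at this; linarith
    · have hsub : ball (x : EuclideanSpace ℝ (Fin n)) (m / 2) ⊆ ball a ε := by
        apply ball_in_ball hxb
        have := min_le_left (ε - dist (x : EuclideanSpace ℝ (Fin n)) a) (lastCoord n x.1)
        rw [← hm] at this; linarith
      exact fun y hy => hsub hy
  · have hxb : (x : EuclideanSpace ℝ (Fin n)) ∈ ball (a + ε • eVec n) ε := by
      rcases hx with hx | hx
      · exfalso
        have : (x : EuclideanSpace ℝ (Fin n)) = a := hx
        rw [this, ha0] at hpos
        exact lt_irrefl 0 hpos
      · exact hx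
    have h3 : 0 < ε - dist (x : EuclideanSpace ℝ (Fin n)) (a + ε • eVec n) := by
      have := mem_ball.mp hxb; linarith
    set m := min (ε - dist (x : EuclideanSpace ℝ (Fin n)) (a + ε • eVec n)) (lastCoord n x.1)
      with hm
    have hm0 : 0 < m := lt_min h3 hpos
    refine ⟨m / 2, by linarith, ?_, ?_⟩
    · have := min_le_right (ε - dist (x : EuclideanSpace ℝ (Fin n)) (a + ε • eVec n))
        (lastCoord n x.1)
      rw [← hm] at this; linarith
    · have hsub : ball (x : EuclideanSpace ℝ (Fin n)) (m / 2) ⊆ ball (a + ε • eVec n) ε := by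
        apply ball_in_ball hxb
        have := min_le_left (ε - dist (x : EuclideanSpace ℝ (Fin n)) (a + ε • eVec n))
          (lastCoord n x.1)
        rw [← hm] at this; linarith
      exact fun y hy => Or.inr (hsub hy)

lemma shrink_A {t : Set (HalfSpace n)} (hn : 0 < n) (ht : t ∈ niemGen n A)
    {x : HalfSpace n} (hx : x ∈ t) (h0 : lastCoord n x.1 = 0) (hxA : x.1 ∈ A) :
    ∃ δ, 0 < δ ∧ (Subtype.val ⁻¹' ball x.1 δ : Set (HalfSpace n)) ⊆ t := by
  rcases ht with (⟨a, _, ε, hε, hεa, rfl⟩ | ⟨a, _, ε, hε, rfl⟩) | ⟨a, ⟨ha0, haA⟩, ε, hε, rfl⟩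
  · exact absurd h0 (ne_of_gt (ball_subset_openHalf hεa hx))
  · have hxb : (x : EuclideanSpace ℝ (Fin n)) ∈ ball a ε := hx
    have h3 : 0 < ε - dist (x : EuclideanSpace ℝ (Fin n)) a := by
      have := mem_ball.mp hxb; linarith
    exact ⟨ε - dist (x : EuclideanSpace ℝ (Fin n)) a, h3,
      fun y hy => ball_in_ball hxb le_rfl hy⟩
  · have : (x : EuclideanSpace ℝ (Fin n)) = a :=
      eq_of_mem_tangentBall hn (le_of_eq ha0.symm) hx h0
    exact absurd hxA (this ▸ haA)

lemma shrink_nA {t : Set (HalfSpace n)} (hn : 0 < n) (ht : t ∈ niemGen n A)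
    {x : HalfSpace n} (hx : x ∈ t) (h0 : lastCoord n x.1 = 0) (hxA : x.1 ∉ A) :
    ∃ δ, 0 < δ ∧ (Subtype.val ⁻¹' tangentBall n x.1 δ : Set (HalfSpace n)) ⊆ t := by
  rcases ht with (⟨a, _, ε, hε, hεa, rfl⟩ | ⟨a, _, ε, hε, rfl⟩) | ⟨a, ⟨ha0, haA⟩, ε, hε, rfl⟩
  · exact absurd h0 (ne_of_gt (ball_subset_openHalf hεa hx))
  · have hxb : (x : EuclideanSpace ℝ (Fin n)) ∈ ball a ε := hx
    have h3 : 0 < ε - dist (x : EuclideanSpace ℝ (Fin n)) a := by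
      have := mem_ball.mp hxb; linarith
    refine ⟨(ε - dist (x : EuclideanSpace ℝ (Fin n)) a) / 3, by linarith, ?_⟩
    intro y hy
    have h4 : tangentBall n x.1 ((ε - dist (x : EuclideanSpace ℝ (Fin n)) a) / 3)
        ⊆ ball x.1 (ε - dist (x : EuclideanSpace ℝ (Fin n)) a) :=
      tangentBall_subset_ball hn (by linarith) (by linarith)
    exact ball_in_ball hxb le_rfl (h4 hy)
  · have hxa : (x : EuclideanSpace ℝ (Fin n)) = a :=
      eq_of_mem_tangentBall hn (le_of_eq ha0.symm) hx h0
    refine ⟨ε, hε, ?_⟩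
    intro y hy
    show y.1 ∈ tangentBall n a ε
    rw [← hxa]
    exact hy

lemma gen_type1 {x : HalfSpace n} (hpos : 0 < lastCoord n x.1) {δ : ℝ} (hδ : 0 < δ)
    (hδ' : δ < lastCoord n x.1) :
    (Subtype.val ⁻¹' ball x.1 δ : Set (HalfSpace n)) ∈ niemGen n A :=
  Or.inl (Or.inl ⟨x.1, hpos, δ, hδ, hδ', rfl⟩)

lemma gen_type2 {x : HalfSpace n} (hxA : x.1 ∈ A) {δ : ℝ} (hδ : 0 < δ) :
    (Subtype.val ⁻¹' ball x.1 δ : Set (HalfSpace n)) ∈ niemGen n A :=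
  Or.inl (Or.inr ⟨x.1, hxA, δ, hδ, rfl⟩)

lemma gen_type3 {x : HalfSpace n} (h0 : lastCoord n x.1 = 0) (hxA : x.1 ∉ A) {δ : ℝ}
    (hδ : 0 < δ) :
    (Subtype.val ⁻¹' tangentBall n x.1 δ : Set (HalfSpace n)) ∈ niemGen n A :=
  Or.inr ⟨x.1, ⟨h0, hxA⟩, δ, hδ, rfl⟩

lemma basis (hn : 0 < n) :
    @IsTopologicalBasis (HalfSpace n) (tau n A) (niemGen n A) := by
  refine @IsTopologicalBasis.mk _ (tau n A) _ ?_ ?_ rfl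
  · rintro t₁ ht₁ t₂ ht₂ x ⟨hx₁, hx₂⟩
    have hx2 : 0 ≤ lastCoord n x.1 := x.2
    rcases lt_or_eq_of_le hx2 with hpos | h0
    · obtain ⟨δ₁, hδ₁, hδ₁', hs₁⟩ := shrink_pos hn ht₁ hx₁ hpos
      obtain ⟨δ₂, hδ₂, hδ₂', hs₂⟩ := shrink_pos hn ht₂ hx₂ hpos
      refine ⟨Subtype.val ⁻¹' ball x.1 (min δ₁ δ₂), gen_type1 hpos (lt_min hδ₁ hδ₂)
        (lt_of_le_of_lt (min_le_left _ _) hδ₁'), ?_, ?_⟩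
      · exact mem_ball_self (lt_min hδ₁ hδ₂)
      · intro y hy
        exact ⟨hs₁ (ball_subset_ball (min_le_left _ _) hy),
          hs₂ (ball_subset_ball (min_le_right _ _) hy)⟩
    · by_cases hxA : x.1 ∈ A
      · obtain ⟨δ₁, hδ₁, hs₁⟩ := shrink_A hn ht₁ hx₁ h0.symm hxA
        obtain ⟨δ₂, hδ₂, hs₂⟩ := shrink_A hn ht₂ hx₂ h0.symm hxA
        refine ⟨Subtype.val ⁻¹' ball x.1 (min δ₁ δ₂), gen_type2 hxA (lt_min hδ₁ hδ₂), ?_, ?_⟩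
        · exact mem_ball_self (lt_min hδ₁ hδ₂)
        · intro y hy
          exact ⟨hs₁ (ball_subset_ball (min_le_left _ _) hy),
            hs₂ (ball_subset_ball (min_le_right _ _) hy)⟩
      · obtain ⟨δ₁, hδ₁, hs₁⟩ := shrink_nA hn ht₁ hx₁ h0.symm hxA
        obtain ⟨δ₂, hδ₂, hs₂⟩ := shrink_nA hn ht₂ hx₂ h0.symm hxA
        refine ⟨Subtype.val ⁻¹' tangentBall n x.1 (min δ₁ δ₂),
          gen_type3 h0.symm hxA (lt_min hδ₁ hδ₂), mem_tangentBall_self, ?_⟩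
        intro y hy
        exact ⟨hs₁ (tangentBall_mono hn (lt_min hδ₁ hδ₂) (min_le_left _ _) hy),
          hs₂ (tangentBall_mono hn (lt_min hδ₁ hδ₂) (min_le_right _ _) hy)⟩
  · apply eq_univ_of_forall
    intro x
    rw [mem_sUnion]
    have hx2 : 0 ≤ lastCoord n x.1 := x.2
    rcases lt_or_eq_of_le hx2 with hpos | h0
    · exact ⟨_, gen_type1 hpos (by linarith) (by linarith : lastCoord n x.1 / 2 < lastCoord n x.1),
        mem_ball_self (by linarith)⟩
    · by_cases hxA : x.1 ∈ A
      · exact ⟨_, gen_type2 hxA one_pos, mem_ball_self one_pos⟩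
      · exact ⟨_, gen_type3 h0.symm hxA one_pos, mem_tangentBall_self⟩

/-- `τ(A)` is finer than the Euclidean subspace topology. -/
lemma continuous_val (hn : 0 < n) :
    @Continuous (HalfSpace n) (EuclideanSpace ℝ (Fin n)) (tau n A) _ Subtype.val := by
  refine (@continuous_def _ _ (tau n A) _ Subtype.val).mpr ?_
  intro U hU
  refine (@IsTopologicalBasis.isOpen_iff _ (tau n A) _ _ (basis hn)).mpr ?_
  intro x hx
  obtain ⟨ε, hε, hball⟩ := Metric.isOpen_iff.mp hU x.1 hx
  have hx2 : 0 ≤ lastCoord n x.1 := x.2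
  rcases lt_or_eq_of_le hx2 with hpos | h0
  · set δ := min ε (lastCoord n x.1) / 2 with hδdef
    have hδ0 : 0 < δ := by have := lt_min hε hpos; positivity
    refine ⟨Subtype.val ⁻¹' ball x.1 δ, gen_type1 hpos hδ0 ?_, mem_ball_self hδ0, ?_⟩
    · have := min_le_right ε (lastCoord n x.1); rw [hδdef]; linarith
    · intro y hy
      apply hball
      exact ball_subset_ball (by have := min_le_left ε (lastCoord n x.1); rw [hδdef]; linarith) hy
  · by_cases hxA : x.1 ∈ A
    · refine ⟨Subtype.val ⁻¹' ball x.1 ε, gen_type2 hxA hε, mem_ball_self hε, ?_⟩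
      exact fun y hy => hball hy
    · refine ⟨Subtype.val ⁻¹' tangentBall n x.1 (ε / 3), gen_type3 h0.symm hxA (by linarith),
        mem_tangentBall_self, ?_⟩
      intro y hy
      exact hball (tangentBall_subset_ball hn (by linarith) (by linarith) hy)

/-- A countable `τ(A)`-dense set. -/
lemma exists_dense (hn : 0 < n) (hA : A ⊆ Bdry n) :
    ∃ D : Set (HalfSpace n), D.Countable ∧ @Dense (HalfSpace n) (tau n A) D := by
  obtain ⟨c, hc, hcd⟩ := TopologicalSpace.exists_countable_dense (EuclideanSpace ℝ (Fin n))
  refine ⟨Subtype.val ⁻¹' c, (hc.preimage Subtype.val_injective), ?_⟩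
  refine (@IsTopologicalBasis.dense_iff _ (tau n A) _ (basis hn) _).mpr ?_
  intro o ho _
  -- produce a nonempty euclidean open V ⊆ (val '' o) with V ⊆ OpenHalf n
  have key : ∃ V : Set (EuclideanSpace ℝ (Fin n)), IsOpen V ∧ V.Nonempty ∧
      V ⊆ OpenHalf n ∧ ∀ p ∈ V, ∀ h : p ∈ HalfSpace n, (⟨p, h⟩ : HalfSpace n) ∈ o := by
    rcases ho with (⟨a, ha, ε, hε, hεa, rfl⟩ | ⟨a, ha, ε, hε, rfl⟩) | ⟨a, ⟨ha0, haA⟩, ε, hε, rfl⟩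
    · exact ⟨ball a ε, isOpen_ball, ⟨a, mem_ball_self hε⟩, ball_subset_openHalf hεa,
        fun p hp _ => hp⟩
    · refine ⟨ball (a + (ε/2) • eVec n) (ε/2), isOpen_ball, ⟨_, mem_ball_self (by linarith)⟩,
        ballPart_subset_openHalf hn (le_of_eq (hA ha).symm), ?_⟩
      intro p hp _
      show p ∈ ball a ε
      rw [mem_ball] at hp ⊢
      calc dist p a ≤ dist p (a + (ε/2) • eVec n) + dist (a + (ε/2) • eVec n) a :=
            dist_triangle _ _ _
        _ < ε/2 + ε/2 := by
            rw [dist_add_smul_eVec hn a (by linarith : (0:ℝ) ≤ ε/2)]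
            linarith
        _ = ε := by ring
    · exact ⟨ball (a + ε • eVec n) ε, isOpen_ball, ⟨_, mem_ball_self hε⟩,
        ballPart_subset_openHalf hn (le_of_eq ha0.symm), fun p hp _ => Or.inr hp⟩
  obtain ⟨V, hVo, hVne, hVP, hVsub⟩ := key
  obtain ⟨p, hpV, hpc⟩ := hcd.inter_open_nonempty V hVo hVne
  have hpP : 0 < lastCoord n p := hVP hpV
  have hpX : p ∈ HalfSpace n := le_of_lt hpP
  exact ⟨⟨p, hpX⟩, hVsub p hpV hpX, hpc⟩

open Cardinal in
lemma card_cont_le (hn : 0 < n) (hA : A ⊆ Bdry n) :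
    #{f : HalfSpace n → ℝ // @Continuous _ _ (tau n A) _ f} ≤ Cardinal.continuum := by
  obtain ⟨D, hDc, hDd⟩ := exists_dense (A := A) hn hA
  have hinj : Function.Injective
      (fun f : {f : HalfSpace n → ℝ // @Continuous _ _ (tau n A) _ f} => fun d : D => f.1 d.1) := by
    intro f g h
    apply Subtype.ext
    refine @Continuous.ext_on ℝ (HalfSpace n) _ (tau n A) _ D hDd f.1 g.1 f.2 g.2 ?_
    intro x hx
    exact congrFun h ⟨x, hx⟩
  calc #{f : HalfSpace n → ℝ // @Continuous _ _ (tau n A) _ f}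
      ≤ #(D → ℝ) := Cardinal.mk_le_of_injective hinj
    _ = #ℝ ^ #D := (Cardinal.power_def ℝ D).symm
    _ ≤ Cardinal.continuum ^ Cardinal.aleph0 := by
        rw [Cardinal.mk_real]
        apply Cardinal.power_le_power_left Cardinal.continuum_ne_zero
        rwa [Cardinal.mk_le_aleph0_iff, Set.countable_coe_iff]
    _ = Cardinal.continuum := Cardinal.continuum_power_aleph0

open Cardinal in
lemma card_zero_le (hn : 0 < n) (hA : A ⊆ Bdry n) :
    #{Z : Set (HalfSpace n) // @IsZeroSet _ (tau n A) Z} ≤ Cardinal.continuum := by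
  have hinj : Function.Injective
      (fun Z : {Z : Set (HalfSpace n) // @IsZeroSet _ (tau n A) Z} =>
        (⟨Z.2.choose, Z.2.choose_spec.1⟩ : {f : HalfSpace n → ℝ // @Continuous _ _ (tau n A) _ f})) := by
    intro Z W h
    have h' : Z.2.choose = W.2.choose := congrArg Subtype.val h
    apply Subtype.ext
    rw [Z.2.choose_spec.2, W.2.choose_spec.2, h']
  exact (Cardinal.mk_le_of_injective hinj).trans (card_cont_le hn hA)

open Cardinal in
lemma no_injection (hn : 0 < n) (hA : A ⊆ Bdry n) {β : Type} (hβ : Cardinal.continuum ≤ #β)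
    (g : Set β → {Z : Set (HalfSpace n) // @IsZeroSet _ (tau n A) Z})
    (hg : Function.Injective g) : False := by
  have h1 : #(Set β) ≤ Cardinal.continuum := (Cardinal.mk_le_of_injective hg).trans
    (card_zero_le hn hA)
  rw [Cardinal.mk_set] at h1
  have h2 : (2 : Cardinal) ^ Cardinal.continuum ≤ 2 ^ #β :=
    Cardinal.power_le_power_left two_ne_zero hβ
  have h3 : (2 : Cardinal) ^ Cardinal.continuum ≤ Cardinal.continuum := h2.trans h1
  have h4 : Cardinal.continuum < 2 ^ Cardinal.continuum := Cardinal.cantor _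
  have h5 := lt_of_lt_of_le h4 h3
  exact lt_irrefl _ h5

lemma isOpen_gen {s : Set (HalfSpace n)} (hs : s ∈ niemGen n A) : @IsOpen _ (tau n A) s :=
  TopologicalSpace.isOpen_generateFrom_of_mem hs

/-- points over `Bdry \ A` are isolated in any subset of the boundary -/
lemma isolated (hn : 0 < n) {Y : Set (HalfSpace n)}
    (hY : ∀ y ∈ Y, (y : EuclideanSpace ℝ (Fin n)) ∈ Bdry n)
    {b : ↥Y} (hb : (b : HalfSpace n).1 ∈ Bdry n \ A) :
    @IsOpen ↥Y (@instTopologicalSpaceSubtype _ _ (tau n A)) {b} := by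
  have hU : (Subtype.val ⁻¹' tangentBall n (b : HalfSpace n).1 1 : Set (HalfSpace n))
      ∈ niemGen n A := gen_type3 hb.1 hb.2 one_pos
  refine ⟨_, isOpen_gen hU, ?_⟩
  ext z
  simp only [Set.mem_preimage, Set.mem_singleton_iff]
  constructor
  · intro hz
    have hz0 : lastCoord n (z : HalfSpace n).1 = 0 := hY z.1 z.2
    have hb2 : 0 ≤ lastCoord n (b : HalfSpace n).1 := (b : HalfSpace n).2
    have := eq_of_mem_tangentBall hn hb2 hz hz0
    exact Subtype.ext (Subtype.ext this)
  · rintro rfl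
    exact mem_tangentBall_self

/-- In a subset of isolated points, every function is continuous at those points;
singleton-nbhd continuity helper. -/
lemma continuousAt_of_singleton_nhds {Z : Type*} [TopologicalSpace Z] {f : Z → ℝ} {z : Z}
    (h : {z} ∈ nhds z) : ContinuousAt f z := by
  have : nhds z = pure z := by
    refine le_antisymm ?_ (pure_le_nhds z)
    intro s hs
    filter_upwards [h] with w hw
    rw [Set.mem_singleton_iff] at hw
    subst hw
    exact hs
  rw [ContinuousAt, this]
  exact tendsto_pure_nhds f z

/-- every subset of `Y` sitting over `Bdry \ A` boundary points is a zero set of `Y`,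
provided `Y` consists of such points entirely — part (i) version. -/
lemma all_subsets_zero (hn : 0 < n) {B : Set (EuclideanSpace ℝ (Fin n))}
    (hB : B ⊆ Bdry n \ A) (S : Set ↥(Subtype.val ⁻¹' B : Set (HalfSpace n))) :
    @IsZeroSet ↥(Subtype.val ⁻¹' B : Set (HalfSpace n))
      (@instTopologicalSpaceSubtype _ _ (tau n A)) S := by
  classical
  letI : TopologicalSpace (HalfSpace n) := tau n A
  have hYb : ∀ y ∈ (Subtype.val ⁻¹' B : Set (HalfSpace n)),
      (y : EuclideanSpace ℝ (Fin n)) ∈ Bdry n := fun y hy => (hB hy).1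
  refine ⟨fun y => if y ∈ S then (0:ℝ) else 1, ?_, ?_⟩
  · rw [continuous_iff_continuousAt]
    intro y
    have hb : (y : HalfSpace n).1 ∈ Bdry n \ A := hB y.2
    have hopen := isolated (A := A) hn hYb hb
    exact continuousAt_of_singleton_nhds (hopen.mem_nhds rfl)
  · ext y
    by_cases hy : y ∈ S <;> simp [hy]

lemma part_one (hn : 0 < n) (hA : A ⊆ Bdry n) (B : Set (EuclideanSpace ℝ (Fin n)))
    (hB : B ⊆ Bdry n \ A) (hcard : Cardinal.mk B = Cardinal.continuum)
    (hz : @ZEmbedded (HalfSpace n) (tau n A) (Subtype.val ⁻¹' B)) : False := by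
  set Y : Set (HalfSpace n) := Subtype.val ⁻¹' B with hY
  have hzs : ∀ S : Set ↥Y, ∃ Z : Set (HalfSpace n), @IsZeroSet _ (tau n A) Z ∧
      S = Subtype.val ⁻¹' Z := fun S => hz S (all_subsets_zero hn hB S)
  set g : Set ↥Y → {Z : Set (HalfSpace n) // @IsZeroSet _ (tau n A) Z} :=
    fun S => ⟨(hzs S).choose, (hzs S).choose_spec.1⟩ with hg
  have hginj : Function.Injective g := by
    intro S T h
    have h' : (hzs S).choose = (hzs T).choose := congrArg Subtype.val h
    rw [(hzs S).choose_spec.2, (hzs T).choose_spec.2, h']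
  have e : ↥Y ≃ ↥B :=
    { toFun := fun y => ⟨y.1.1, y.2⟩
      invFun := fun b => ⟨⟨b.1, le_of_eq ((hB b.2).1).symm⟩, b.2⟩
      left_inv := fun y => Subtype.ext (Subtype.ext rfl)
      right_inv := fun b => rfl }
  have hcardY : Cardinal.continuum ≤ Cardinal.mk ↥Y := by
    rw [Cardinal.mk_congr e, hcard]
  exact no_injection hn hA hcardY g hginj

lemma bdry_closed : IsClosed (Bdry n) := by
  have : Bdry n = lastCoord n ⁻¹' {0} := rfl
  rw [this]
  exact isClosed_singleton.preimage lastCoord_continuous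

lemma part_two (hn : 0 < n) (hA : A ⊆ Bdry n) (B : Set (EuclideanSpace ℝ (Fin n)))
    (hB : B ⊆ Bdry n \ A) (hBunc : ¬ B.Countable)
    (hBcl : IsClosed (Subtype.val ⁻¹' B : Set (Bdry n)))
    (hz : @ZEmbedded (HalfSpace n) (tau n A) (Subtype.val ⁻¹' Bdry n)) : False := by
  classical
  have hBsub : B ⊆ Bdry n := fun x hx => (hB hx).1
  have hBclosed : IsClosed B := by
    have h1 := (bdry_closed (n := n)).isClosedEmbedding_subtypeVal.isClosed_iff_image_isClosed.mp
      hBcl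
    rwa [Subtype.image_preimage_coe, inter_eq_self_of_subset_right hBsub] at h1
  have hBne : B.Nonempty :=
    Set.nonempty_iff_ne_empty.mpr (fun h => hBunc (h ▸ Set.countable_empty))
  have hcardB : Cardinal.continuum ≤ Cardinal.mk ↥B := by
    obtain ⟨f, hfr, _, hfinj⟩ := hBclosed.exists_nat_bool_injection_of_not_countable hBunc
    have hinj : Function.Injective (fun x : ℕ → Bool => (⟨f x, hfr ⟨x, rfl⟩⟩ : ↥B)) := by
      intro x y h
      exact hfinj (congrArg Subtype.val h)
    have := Cardinal.mk_le_of_injective hinj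
    rwa [← Cardinal.power_def, Cardinal.mk_bool, Cardinal.mk_nat,
      Cardinal.two_power_aleph0] at this
  letI : TopologicalSpace (HalfSpace n) := tau n A
  set Y : Set (HalfSpace n) := Subtype.val ⁻¹' Bdry n with hYdef
  have hYb : ∀ y ∈ Y, (y : EuclideanSpace ℝ (Fin n)) ∈ Bdry n := fun y hy => hy
  have hvalc : Continuous fun z : ↥Y => ((z : HalfSpace n) : EuclideanSpace ℝ (Fin n)) :=
    (continuous_val (A := A) hn).comp continuous_subtype_val
  -- each subset of B over Y is a zero set of Y
  have hzs : ∀ T : Set ↥B, ∃ Z : Set (HalfSpace n), @IsZeroSet _ (tau n A) Z ∧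
      {y : ↥Y | ((y : HalfSpace n) : EuclideanSpace ℝ (Fin n)) ∈ Subtype.val '' T}
        = Subtype.val ⁻¹' Z := by
    intro T
    apply hz
    have hTsub : (Subtype.val '' T : Set (EuclideanSpace ℝ (Fin n))) ⊆ B := by
      rintro _ ⟨b, _, rfl⟩; exact b.2
    refine ⟨fun y => if ((y : HalfSpace n) : EuclideanSpace ℝ (Fin n)) ∈ Subtype.val '' T then 0
      else if ((y : HalfSpace n) : EuclideanSpace ℝ (Fin n)) ∈ B then 1
      else infDist ((y : HalfSpace n) : EuclideanSpace ℝ (Fin n)) B, ?_, ?_⟩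
    · rw [continuous_iff_continuousAt]
      intro y
      by_cases hyB : ((y : HalfSpace n) : EuclideanSpace ℝ (Fin n)) ∈ B
      · exact continuousAt_of_singleton_nhds
          ((isolated (A := A) hn hYb (hB hyB)).mem_nhds rfl)
      · have hW : IsOpen {z : ↥Y | ((z : HalfSpace n) : EuclideanSpace ℝ (Fin n)) ∈ Bᶜ} :=
          hBclosed.isOpen_compl.preimage hvalc
        have hWy : {z : ↥Y | ((z : HalfSpace n) : EuclideanSpace ℝ (Fin n)) ∈ Bᶜ} ∈ nhds y :=
          hW.mem_nhds hyB
        have hcont : ContinuousAt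
            (fun z : ↥Y => infDist ((z : HalfSpace n) : EuclideanSpace ℝ (Fin n)) B) y :=
          ((continuous_infDist_pt B).comp hvalc).continuousAt
        apply hcont.congr
        filter_upwards [hWy] with z hz'
        have h1 : ((z : HalfSpace n) : EuclideanSpace ℝ (Fin n)) ∉ Subtype.val '' T :=
          fun h => hz' (hTsub h)
        simp only [if_neg h1, if_neg hz']
    · ext y
      by_cases h1 : ((y : HalfSpace n) : EuclideanSpace ℝ (Fin n)) ∈ Subtype.val '' T
      · simp only [Set.mem_setOf_eq, Set.mem_preimage, Set.mem_singleton_iff, if_pos h1]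
        exact iff_of_true h1 trivial
      · by_cases h2 : ((y : HalfSpace n) : EuclideanSpace ℝ (Fin n)) ∈ B
        · simp only [Set.mem_setOf_eq, Set.mem_preimage, Set.mem_singleton_iff, if_neg h1,
            if_pos h2]
          exact iff_of_false h1 one_ne_zero
        · have h3 : 0 < infDist ((y : HalfSpace n) : EuclideanSpace ℝ (Fin n)) B :=
            (hBclosed.notMem_iff_infDist_pos hBne).mp h2
          simp only [Set.mem_setOf_eq, Set.mem_preimage, Set.mem_singleton_iff, if_neg h1,
            if_neg h2]
          exact iff_of_false h1 (ne_of_gt h3)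
  set g : Set ↥B → {Z : Set (HalfSpace n) // @IsZeroSet _ (tau n A) Z} :=
    fun T => ⟨(hzs T).choose, (hzs T).choose_spec.1⟩ with hgdef
  have hginj : Function.Injective g := by
    intro T T' h
    have h' : (hzs T).choose = (hzs T').choose := congrArg Subtype.val h
    have hST : {y : ↥Y | ((y : HalfSpace n) : EuclideanSpace ℝ (Fin n)) ∈ Subtype.val '' T}
        = {y : ↥Y | ((y : HalfSpace n) : EuclideanSpace ℝ (Fin n)) ∈ Subtype.val '' T'} := by
      rw [(hzs T).choose_spec.2, (hzs T').choose_spec.2, h']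
    ext b
    have hbY : (⟨b.1, le_of_eq ((hB b.2).1).symm⟩ : HalfSpace n) ∈ Y := (hB b.2).1
    have hmem := Set.ext_iff.mp hST ⟨⟨b.1, le_of_eq ((hB b.2).1).symm⟩, hbY⟩
    simp only [Set.mem_setOf_eq] at hmem
    rw [← Subtype.val_injective.mem_set_image (a := b) (s := T),
      ← Subtype.val_injective.mem_set_image (a := b) (s := T')]
    exact hmem
  exact no_injection hn hA hcardB g hginj

end TauProof

end
/-- For every `n ≥ 2` and `A ⊆ L`: (i) any `B ⊆ L \ A` of cardinality continuum is not
z-embedded in `(X, τ(A))`; (ii) if some `B ⊆ L \ A` is uncountable and closed in the Euclidean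
topology of `L`, then `L` is not z-embedded in `(X, τ(A))`. -/
theorem tauA_not_zEmbedded (n : ℕ) (hn : 2 ≤ n)
    (A : Set (EuclideanSpace ℝ (Fin n))) (hA : A ⊆ Bdry n) :
    (∀ B : Set (EuclideanSpace ℝ (Fin n)), B ⊆ Bdry n \ A →
      Cardinal.mk B = Cardinal.continuum →
      ¬ @ZEmbedded (HalfSpace n) (tau n A) (Subtype.val ⁻¹' B)) ∧
    (∀ B : Set (EuclideanSpace ℝ (Fin n)), B ⊆ Bdry n \ A → ¬ B.Countable →
      IsClosed (Subtype.val ⁻¹' B : Set (Bdry n)) →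
      ¬ @ZEmbedded (HalfSpace n) (tau n A) (Subtype.val ⁻¹' Bdry n)) := by
  have hn0 : 0 < n := by omega
  constructor
  · intro B hBsub hcard hz
    exact TauProof.part_one hn0 hA B hBsub hcard hz
  · intro B hBsub hBunc hBcl hz
    exact TauProof.part_two hn0 hA B hBsub hBunc hBcl hz
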